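/- arXiv:1711.02338 — 2 statements merged into one kernel-verified Lean document; each statement's English description precedes it below -/
import Mathlib

section
/- Fix q with 1 ≤ q < 4 and set r = (1/π) * arccos(√q / 2). For θ ∈ (0, π) define y(θ) = √q * sin(r(π − θ)) / sin(rθ). Then for all a, b, c ∈ (0, π) with a + b + c = 2π, one has y(a)y(b)y(c) + y(a)y(b) + y(b)y(c) + y(c)y(a) = q. -/
open Real

lemma key_tri (A B S : ℝ) :
    2 * cos S * (sin (S - A) * sin (S - B) * sin (A + B - S))
      + sin (S - A) * sin (S - B) * sin (2 * S - A - B)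
      + sin (S - B) * sin (A + B - S) * sin A
      + sin (A + B - S) * sin (S - A) * sin B
    = sin A * sin B * sin (2 * S - A - B) := by
  simp only [sin_sub, sin_add, cos_sub, cos_add, sin_two_mul, cos_two_mul]
  linear_combination (sin A * cos A * sin B ^ 2 + sin A ^ 2 * sin B * cos B) *
    (sin_sq_add_cos_sq S)

theorem stmt_1 (q : ℝ) (hq1 : 1 ≤ q) (hq4 : q < 4)
    (r : ℝ) (hr : r = (1 / π) * arccos (sqrt q / 2))
    (y : ℝ → ℝ) (hy : ∀ θ ∈ Set.Ioo (0:ℝ) π, y θ = sqrt q * sin (r * (π - θ)) / sin (r * θ))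
    (a b c : ℝ) (ha : a ∈ Set.Ioo (0:ℝ) π) (hb : b ∈ Set.Ioo (0:ℝ) π)
    (hc : c ∈ Set.Ioo (0:ℝ) π) (habc : a + b + c = 2 * π) :
    y a * y b * y c + y a * y b + y b * y c + y c * y a = q := by
  obtain ⟨ha1, ha2⟩ := ha
  obtain ⟨hb1, hb2⟩ := hb
  obtain ⟨hc1, hc2⟩ := hc
  have hq0 : (0:ℝ) ≤ q := by linarith
  have hs2 : sqrt q ^ 2 = q := sq_sqrt hq0
  have hs0 : 0 ≤ sqrt q := sqrt_nonneg q
  have hslt : sqrt q < 2 := by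
    nlinarith [hs2]
  set S := arccos (sqrt q / 2) with hS
  have hcos : cos S = sqrt q / 2 := cos_arccos (by linarith) (by linarith)
  have hSpos : 0 < S := arccos_pos.mpr (by linarith)
  have hSle : S ≤ π / 2 := by
    rw [hS, arccos, sub_le_self_iff]
    exact arcsin_nonneg.mpr (by positivity)
  have hpi : (0:ℝ) < π := pi_pos
  have hrπ : r * π = S := by
    rw [hr]; field_simp
  have hrpos : 0 < r := by
    have h : 0 < r * π := hrπ ▸ hSpos
    nlinarith
  have hsinpos : ∀ θ : ℝ, 0 < θ → θ < π → 0 < sin (r * θ) := by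
    intro θ h1 h2
    apply sin_pos_of_pos_of_lt_pi (by positivity)
    calc r * θ < r * π := by apply mul_lt_mul_of_pos_left h2 hrpos
    _ = S := hrπ
    _ < π := by linarith
  have hA : sin (r * a) ≠ 0 := ne_of_gt (hsinpos a ha1 ha2)
  have hB : sin (r * b) ≠ 0 := ne_of_gt (hsinpos b hb1 hb2)
  have hC : sin (r * c) ≠ 0 := ne_of_gt (hsinpos c hc1 hc2)
  have hsq : sqrt q = 2 * cos S := by linarith
  have hq' : q = 4 * cos S ^ 2 := by rw [← hs2, hsq]; ring
  have eC : r * c = 2 * S - r * a - r * b := by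
    linear_combination r * habc + 2 * hrπ
  have e1 : r * (π - a) = S - r * a := by linear_combination hrπ
  have e2 : r * (π - b) = S - r * b := by linear_combination hrπ
  have e3 : r * (π - c) = r * a + r * b - S := by
    linear_combination (-1 : ℝ) * hrπ + (-r) * habc
  rw [hy a ⟨ha1, ha2⟩, hy b ⟨hb1, hb2⟩, hy c ⟨hc1, hc2⟩, e1, e2, e3, eC, hsq]
  rw [eC] at hC
  have key := key_tri (r * a) (r * b) S
  field_simp
  rw [show r * (a + b) = r * a + r * b by ring]
  linear_combination (4 * cos S ^ 2) * key
    - (sin (r*a) * sin (r*b) * sin (2*S - r*a - r*b)) * hq'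
end

section
/- Fix q > 4 and set r = (1/π) * arccosh(√q / 2) (so cosh(rπ) = √q/2). For θ ∈ (0, π) define y(θ) = √q * sinh(r(π − θ)) / sinh(rθ). Then for all a, b, c ∈ (0, π) with a + b + c = 2π, one has y(a)y(b)y(c) + y(a)y(b) + y(b)y(c) + y(c)y(a) = q. -/
open Real

/-- `arccosh x = log (x + √(x² − 1))`, the inverse of `cosh` on `[1, ∞)`. -/
noncomputable def arccosh (x : ℝ) : ℝ := Real.log (x + Real.sqrt (x ^ 2 - 1))

set_option maxHeartbeats 1000000 in
theorem stmt_3 (q : ℝ) (hq : 4 < q)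
    (r : ℝ) (hr : r = (1 / π) * arccosh (sqrt q / 2))
    (hcosh : Real.cosh (r * π) = sqrt q / 2)
    (y : ℝ → ℝ) (hy : ∀ θ ∈ Set.Ioo (0:ℝ) π, y θ = sqrt q * sinh (r * (π - θ)) / sinh (r * θ))
    (a b c : ℝ) (ha : a ∈ Set.Ioo (0:ℝ) π) (hb : b ∈ Set.Ioo (0:ℝ) π)
    (hc : c ∈ Set.Ioo (0:ℝ) π) (habc : a + b + c = 2 * π) :
    y a * y b * y c + y a * y b + y b * y c + y c * y a = q := by
  have hq0 : (0:ℝ) ≤ q := by linarith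
  have hr0 : r ≠ 0 := by
    intro h
    rw [h, zero_mul, Real.cosh_zero] at hcosh
    have : sqrt 4 < sqrt q := Real.sqrt_lt_sqrt (by norm_num) hq
    rw [show sqrt 4 = 2 by rw [show (4:ℝ) = 2^2 by norm_num, Real.sqrt_sq]; norm_num] at this
    linarith
  have hra : r * a ≠ 0 := mul_ne_zero hr0 (ne_of_gt ha.1)
  have hrb : r * b ≠ 0 := mul_ne_zero hr0 (ne_of_gt hb.1)
  have hrc : r * c ≠ 0 := mul_ne_zero hr0 (ne_of_gt hc.1)
  set xa := Real.exp (r * a) with hxa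
  set xb := Real.exp (r * b) with hxb
  set xp := Real.exp (r * π) with hxp
  have hxa0 : xa ≠ 0 := Real.exp_ne_zero _
  have hxb0 : xb ≠ 0 := Real.exp_ne_zero _
  have hxp0 : xp ≠ 0 := Real.exp_ne_zero _
  -- sinh values as single fractions
  have sa : Real.sinh (r * a) = (xa ^ 2 - 1) / (2 * xa) := by
    rw [Real.sinh_eq, Real.exp_neg, ← hxa]; field_simp
  have sb : Real.sinh (r * b) = (xb ^ 2 - 1) / (2 * xb) := by
    rw [Real.sinh_eq, Real.exp_neg, ← hxb]; field_simp
  have sc : Real.sinh (r * c) = (xp ^ 4 - xa ^ 2 * xb ^ 2) / (2 * xa * xb * xp ^ 2) := by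
    have h1 : r * c = (r * π + r * π) - (r * a + r * b) := by
      have : c = 2 * π - a - b := by linarith
      rw [this]; ring
    rw [Real.sinh_eq, h1, neg_sub, Real.exp_sub, Real.exp_sub, Real.exp_add, Real.exp_add,
      ← hxa, ← hxb, ← hxp]
    field_simp
  have spa : Real.sinh (r * (π - a)) = (xp ^ 2 - xa ^ 2) / (2 * xa * xp) := by
    rw [Real.sinh_eq, show r * (π - a) = r * π - r * a by ring, neg_sub,
      Real.exp_sub, Real.exp_sub, ← hxa, ← hxp]
    field_simp
  have spb : Real.sinh (r * (π - b)) = (xp ^ 2 - xb ^ 2) / (2 * xb * xp) := by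
    rw [Real.sinh_eq, show r * (π - b) = r * π - r * b by ring, neg_sub,
      Real.exp_sub, Real.exp_sub, ← hxb, ← hxp]
    field_simp
  have spc : Real.sinh (r * (π - c)) = (xa ^ 2 * xb ^ 2 - xp ^ 2) / (2 * xa * xb * xp) := by
    have h1 : r * (π - c) = (r * a + r * b) - r * π := by
      have : c = 2 * π - a - b := by linarith
      rw [this]; ring
    rw [Real.sinh_eq, h1, neg_sub, Real.exp_sub, Real.exp_sub, Real.exp_add,
      ← hxa, ← hxb, ← hxp]
    field_simp
  have hsq : sqrt q = (xp ^ 2 + 1) / xp := by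
    have h := hcosh
    rw [Real.cosh_eq, Real.exp_neg, ← hxp] at h
    field_simp at h ⊢
    linarith
  -- nonvanishing of denominators
  have hsa0 : Real.sinh (r * a) ≠ 0 := Real.sinh_ne_zero.mpr hra
  have hsb0 : Real.sinh (r * b) ≠ 0 := Real.sinh_ne_zero.mpr hrb
  have hsc0 : Real.sinh (r * c) ≠ 0 := Real.sinh_ne_zero.mpr hrc
  have da : xa ^ 2 - 1 ≠ 0 := by
    intro h; apply hsa0; rw [sa, h]; norm_num
  have db : xb ^ 2 - 1 ≠ 0 := by
    intro h; apply hsb0; rw [sb, h]; norm_num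
  have dc : xp ^ 4 - xa ^ 2 * xb ^ 2 ≠ 0 := by
    intro h; apply hsc0; rw [sc, h]; norm_num
  have hq' : q = (xp ^ 2 + 1) ^ 2 / xp ^ 2 := by
    rw [← Real.sq_sqrt hq0, hsq]; rw [div_pow]
  have ya_eq : y a = (xp ^ 2 + 1) * (xp ^ 2 - xa ^ 2) / (xp ^ 2 * (xa ^ 2 - 1)) := by
    rw [hy a ha, sa, spa, hsq]; field_simp
  have yb_eq : y b = (xp ^ 2 + 1) * (xp ^ 2 - xb ^ 2) / (xp ^ 2 * (xb ^ 2 - 1)) := by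
    rw [hy b hb, sb, spb, hsq]; field_simp
  have yc_eq : y c = (xp ^ 2 + 1) * (xa ^ 2 * xb ^ 2 - xp ^ 2) / (xp ^ 4 - xa ^ 2 * xb ^ 2) := by
    rw [hy c hc, sc, spc, hsq]; field_simp
  rw [ya_eq, yb_eq, yc_eq, hq']
  field_simp
  ring
end
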